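/- For 0 < Δt ≤ 1 and x > 1, the value h(x) = x·e^{Δt(1-x)} satisfies h(x) < x and |h(x) - 1| < x - 1. -/
import Mathlib

/-- For `0 < Δt ≤ 1` and `x > 1`, the value `h(x) = x·e^{Δt(1-x)}` satisfies
`h(x) < x` and `|h(x) - 1| < x - 1`. -/
theorem stmt_4 (Δt x : ℝ) (hΔt0 : 0 < Δt) (hΔt1 : Δt ≤ 1) (hx : 1 < x) :
    x * Real.exp (Δt * (1 - x)) < x ∧
    |x * Real.exp (Δt * (1 - x)) - 1| < x - 1 := by
  have hxpos : (0:ℝ) < x := by linarith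
  have hneg : Δt * (1 - x) < 0 := mul_neg_of_pos_of_neg hΔt0 (by linarith)
  have hexp1 : Real.exp (Δt * (1 - x)) < 1 := by
    have := Real.exp_lt_exp.mpr hneg
    simpa using this
  have h1 : x * Real.exp (Δt * (1 - x)) < x := by
    nlinarith [Real.exp_pos (Δt * (1 - x))]
  refine ⟨h1, abs_lt.mpr ⟨?_, by linarith⟩⟩
  -- need x * exp(Δt(1-x)) - 1 > -(x-1), i.e. h > 2 - x
  have hge : (1 : ℝ) - x ≤ Δt * (1 - x) := by nlinarith
  have h2 : Real.exp (1 - x) ≤ Real.exp (Δt * (1 - x)) := Real.exp_le_exp.mpr hge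
  have h3 : 2 - x < Real.exp (1 - x) := by
    have := Real.add_one_lt_exp (x := 1 - x) (by linarith)
    linarith
  nlinarith [Real.exp_pos (1 - x)]
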